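/- arXiv:1911.10887 — 3 statements merged into one kernel-verified Lean document; each statement's English description precedes it below -/
import Mathlib

section
/- Let F be a field, and let A = ⊗_{i ∈ I} A_i be an infinite tensor product of finite dimensional unital F-algebras, each A_i of dimension at least 2, with I uncountable, and suppose each A_i does not centralize everything (A_i ⊄ center). If S ⊆ A is a countable subset whose centralizer in A equals F·1, then we reach a contradiction; that is, the centralizer of any countable subset of such an A properly contains F·1. -/
/-- Lemma 2 of the paper: let `A` be an infinite tensor product
(colimit style: `A` is generated by the commuting images of the unital maps
`φ i : 𝒜 i →ₐ[F] A`) of finite dimensional unital algebras `𝒜 i` of dimension at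
least `2`, over an uncountable index set `I`, such that no image `φ i (𝒜 i)` is
contained in the center of `A`.  Then the centralizer of any countable subset `S`
of `A` properly contains `F·1`. -/
theorem stmt_9 (F : Type*) [Field F] (I : Type*) (A : Type*) [Ring A] [Algebra F A]
    (𝒜 : I → Type*) [∀ i, Ring (𝒜 i)] [∀ i, Algebra F (𝒜 i)]
    [∀ i, FiniteDimensional F (𝒜 i)] (hdim : ∀ i, 2 ≤ Module.rank F (𝒜 i))
    (φ : ∀ i, 𝒜 i →ₐ[F] A)
    (hgen : Algebra.adjoin F (⋃ i, Set.range (φ i)) = ⊤)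
    (hcomm : ∀ i j, i ≠ j → ∀ a b, Commute (φ i a) (φ j b))
    (hI : ¬ Countable I)
    (hnc : ∀ i, ¬ (Set.range (φ i) ⊆ (Subalgebra.center F A : Set A)))
    (S : Set A) (hS : S.Countable) :
    ⊥ < Subalgebra.centralizer F S := by
  classical
  -- The subalgebra of elements lying in the adjoin of countably many blocks.
  set B : Subalgebra F A :=
    { carrier := { a | ∃ J : Set I, J.Countable ∧
        a ∈ Algebra.adjoin F (⋃ j ∈ J, Set.range (φ j)) }
      mul_mem' := by
        rintro x y ⟨J₁, hJ₁, hx⟩ ⟨J₂, hJ₂, hy⟩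
        refine ⟨J₁ ∪ J₂, hJ₁.union hJ₂, mul_mem ?_ ?_⟩
        · exact Algebra.adjoin_mono (Set.biUnion_subset_biUnion_left
            Set.subset_union_left) hx
        · exact Algebra.adjoin_mono (Set.biUnion_subset_biUnion_left
            Set.subset_union_right) hy
      add_mem' := by
        rintro x y ⟨J₁, hJ₁, hx⟩ ⟨J₂, hJ₂, hy⟩
        refine ⟨J₁ ∪ J₂, hJ₁.union hJ₂, add_mem ?_ ?_⟩
        · exact Algebra.adjoin_mono (Set.biUnion_subset_biUnion_left
            Set.subset_union_left) hx
        · exact Algebra.adjoin_mono (Set.biUnion_subset_biUnion_left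
            Set.subset_union_right) hy
      algebraMap_mem' := fun r =>
        ⟨∅, Set.countable_empty, Subalgebra.algebraMap_mem _ r⟩ } with hB
  have hBtop : B = ⊤ := by
    rw [← top_le_iff, ← hgen]
    apply Algebra.adjoin_le
    rintro x hx
    rw [Set.mem_iUnion] at hx
    obtain ⟨i, hi⟩ := hx
    exact ⟨{i}, Set.countable_singleton i,
      Algebra.subset_adjoin (by simpa using hi)⟩
  -- For each s ∈ S choose a countable set of indices.
  have hchoose : ∀ s : S, ∃ J : Set I, J.Countable ∧
      (s : A) ∈ Algebra.adjoin F (⋃ j ∈ J, Set.range (φ j)) := by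
    intro s
    have : (s : A) ∈ B := hBtop ▸ Algebra.mem_top
    exact this
  choose Js hJsc hJs using hchoose
  have hSc : Countable S := hS.to_subtype
  set J : Set I := ⋃ s : S, Js s with hJdef
  have hJc : J.Countable := Set.countable_iUnion fun s => hJsc s
  -- Pick an index outside J.
  obtain ⟨i, hiJ⟩ : ∃ i : I, i ∉ J := by
    by_contra h
    push_neg at h
    have : J = Set.univ := Set.eq_univ_of_forall h
    rw [this] at hJc
    exact hI (Set.countable_univ_iff.mp hJc)
  -- Pick a noncentral element of block i.
  obtain ⟨x, hxr, hxc⟩ : ∃ x ∈ Set.range (φ i), x ∉ (Subalgebra.center F A : Set A) := by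
    have := hnc i
    rw [Set.not_subset] at this
    exact this
  obtain ⟨a, rfl⟩ := hxr
  -- φ i a centralizes S.
  have hcent : φ i a ∈ Subalgebra.centralizer F S := by
    rw [Subalgebra.mem_centralizer_iff]
    intro s hs
    have hmem : s ∈ Algebra.adjoin F (⋃ j ∈ Js ⟨s, hs⟩, Set.range (φ j)) := hJs ⟨s, hs⟩
    have hle : Algebra.adjoin F (⋃ j ∈ Js ⟨s, hs⟩, Set.range (φ j)) ≤
        Subalgebra.centralizer F {φ i a} := by
      apply Algebra.adjoin_le
      rintro y hy
      rw [Set.mem_iUnion₂] at hy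
      obtain ⟨j, hj, b, rfl⟩ := hy
      rw [SetLike.mem_coe, Subalgebra.mem_centralizer_iff]
      rintro z hz
      rw [Set.mem_singleton_iff] at hz
      subst hz
      have hji : j ≠ i := fun h => hiJ (h ▸ Set.mem_iUnion.mpr ⟨⟨s, hs⟩, hj⟩)
      exact (hcomm j i hji b a).symm
    have := hle hmem
    rw [Subalgebra.mem_centralizer_iff] at this
    exact (this (φ i a) rfl).symm
  -- Conclude strict inequality.
  refine lt_of_le_of_ne ?_ ?_
  · rintro x hx
    obtain ⟨r, rfl⟩ := Algebra.mem_bot.mp hx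
    rw [Subalgebra.mem_centralizer_iff]
    intro s _
    exact (Algebra.commutes r s).symm
  · intro h
    apply hxc
    have : φ i a ∈ (⊥ : Subalgebra F A) := h ▸ hcent
    obtain ⟨r, hr⟩ := Algebra.mem_bot.mp this
    rw [← hr]
    exact Subalgebra.algebraMap_mem _ r
end

section
/- Let F be a field containing a primitive l-th root of unity ξ, with l ≥ 2. The F-algebra generated by two elements x, y with relations x^l = y^l = 1 and yx = ξ xy is isomorphic to the matrix algebra M_l(F). -/
/-- The relations `x ^ l = 1`, `y ^ l = 1`, `y * x = ξ • (x * y)` on the free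
algebra on two generators `x = ι 0`, `y = ι 1`. -/
inductive TwoGenRel (F : Type*) [Field F] (l : ℕ) (ξ : F) :
    FreeAlgebra F (Fin 2) → FreeAlgebra F (Fin 2) → Prop
  | xpow : TwoGenRel F l ξ (FreeAlgebra.ι F (0 : Fin 2) ^ l) 1
  | ypow : TwoGenRel F l ξ (FreeAlgebra.ι F (1 : Fin 2) ^ l) 1
  | comm : TwoGenRel F l ξ (FreeAlgebra.ι F (1 : Fin 2) * FreeAlgebra.ι F (0 : Fin 2))
      (ξ • (FreeAlgebra.ι F (0 : Fin 2) * FreeAlgebra.ι F (1 : Fin 2)))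


open Matrix in
private def Dmat (F : Type*) [Field F] (l : ℕ) (ξ : F) : Matrix (Fin l) (Fin l) F :=
  Matrix.diagonal fun i => ξ⁻¹ ^ (i : ℕ)

open Matrix in
private def Pmat (F : Type*) [Field F] (l : ℕ) [NeZero l] : Matrix (Fin l) (Fin l) F :=
  Matrix.of fun i j => if i = j + 1 then 1 else 0

private lemma Dmat_pow_l {F : Type*} [Field F] {l : ℕ} {ξ : F} (hξl : ξ ^ l = 1) :
    Dmat F l ξ ^ l = 1 := by
  rw [Dmat, Matrix.diagonal_pow]
  have : ((fun i : Fin l => ξ⁻¹ ^ (i : ℕ)) ^ l) = fun _ => (1 : F) := by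
    funext i
    rw [Pi.pow_apply, inv_pow, inv_pow, ← pow_mul, mul_comm, pow_mul, hξl, one_pow, inv_one]
  rw [this, Matrix.diagonal_one]

open Fin.NatCast in
private lemma Pmat_pow {F : Type*} [Field F] {l : ℕ} [NeZero l] (m : ℕ) :
    Pmat F l ^ m = Matrix.of fun i j => if i = j + (m : Fin l) then 1 else 0 := by
  induction m with
  | zero =>
    ext i j
    simp [Matrix.one_apply, eq_comm]
  | succ n ih =>
    ext i j
    rw [pow_succ, Matrix.mul_apply]
    simp only [ih]
    simp only [Pmat, Matrix.of_apply]
    rw [Finset.sum_eq_single (j + 1)]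
    · push_cast
      simp [add_assoc, add_comm (1 : Fin l)]
    · intro k _ hk
      simp [hk]
    · simp

open Fin.NatCast in
private lemma Pmat_pow_l {F : Type*} [Field F] {l : ℕ} [NeZero l] : Pmat F l ^ l = 1 := by
  rw [Pmat_pow]
  ext i j
  simp [Matrix.one_apply, Fin.natCast_self]

private lemma aux_pow_mod' {M : Type*} [Monoid M] (x : M) (l : ℕ) (h : x ^ l = 1) (m : ℕ) :
    x ^ (m % l) = x ^ m := by
  conv_rhs => rw [← Nat.div_add_mod m l]
  rw [pow_add, pow_mul, h, one_pow, one_mul]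

private lemma PD_comm {F : Type*} [Field F] {l : ℕ} (hl : 2 ≤ l) {ξ : F} (hξ0 : ξ ≠ 0)
    (hξl : ξ ^ l = 1) :
    haveI : NeZero l := ⟨by omega⟩
    Pmat F l * Dmat F l ξ = ξ • (Dmat F l ξ * Pmat F l) := by
  have hinv : ξ⁻¹ ^ l = 1 := by rw [inv_pow, hξl, inv_one]
  obtain ⟨m, rfl⟩ : ∃ m, l = m + 2 := ⟨l - 2, by omega⟩
  haveI : NeZero (m + 2) := ⟨by omega⟩
  ext i j
  rw [Dmat, Matrix.mul_diagonal, Matrix.smul_apply, Matrix.diagonal_mul, Pmat]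
  simp only [Matrix.of_apply, smul_eq_mul]
  by_cases hij : i = j + 1
  · subst hij
    rw [if_pos rfl, one_mul, mul_one]
    have hval : ((j + 1 : Fin (m + 2)) : ℕ) = ((j : ℕ) + 1) % (m + 2) := by
      rw [Fin.val_add, Fin.val_one]
    rw [hval, aux_pow_mod' _ _ hinv, pow_succ, ← mul_assoc, mul_comm ξ, mul_assoc,
      mul_inv_cancel₀ hξ0, mul_one]
  · rw [if_neg hij, zero_mul, mul_zero, mul_zero]

open Finset in
private lemma diag_proj {F : Type*} [Field F] {l : ℕ} (hl : 2 ≤ l) {ξ : F}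
    (hξ : IsPrimitiveRoot ξ l) (b : Fin l) :
    (l : F)⁻¹ • ∑ k ∈ Finset.range l, (ξ ^ (b : ℕ)) ^ k • Dmat F l ξ ^ k
      = Matrix.single b b 1 := by
  haveI : NeZero l := ⟨by omega⟩
  have hne : ((l : ℕ) : F) ≠ 0 := (hξ.neZero').out
  have hξ0 : ξ ≠ 0 := hξ.ne_zero (by omega)
  ext i j
  rw [Matrix.smul_apply, Matrix.sum_apply]
  simp only [Matrix.smul_apply, Dmat, Matrix.diagonal_pow, Matrix.diagonal_apply, Pi.pow_apply,
    smul_eq_mul, mul_ite, mul_zero]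
  by_cases hij : i = j
  · subst hij
    simp only [eq_self_iff_true, if_true, if_pos trivial]
    have hsummand : ∀ k, (ξ ^ (b : ℕ)) ^ k * (ξ⁻¹ ^ (i : ℕ)) ^ k
        = (ξ ^ (b : ℕ) * ξ⁻¹ ^ (i : ℕ)) ^ k := fun k => (mul_pow _ _ _).symm
    rw [Finset.sum_congr rfl fun k _ => hsummand k]
    by_cases hib : i = b
    · subst hib
      have hc : ξ ^ (i : ℕ) * ξ⁻¹ ^ (i : ℕ) = 1 := by
        rw [inv_pow, mul_inv_cancel₀ (pow_ne_zero _ hξ0)]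
      rw [hc]
      simp only [one_pow, Finset.sum_const, Finset.card_range, nsmul_eq_mul, mul_one]
      rw [inv_mul_cancel₀ hne]
      simp [Matrix.single]
    · have hc : ξ ^ (b : ℕ) * ξ⁻¹ ^ (i : ℕ) ≠ 1 := by
        intro h
        apply hib
        have hbi : ξ ^ (b : ℕ) = ξ ^ (i : ℕ) := by
          rw [inv_pow] at h
          field_simp at h
          exact h
        exact Fin.ext (hξ.pow_inj i.isLt b.isLt hbi.symm)
      rw [geom_sum_eq hc]
      have hcl : (ξ ^ (b : ℕ) * ξ⁻¹ ^ (i : ℕ)) ^ l = 1 := by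
        rw [mul_pow, ← pow_mul, mul_comm (b : ℕ) l, pow_mul, hξ.pow_eq_one, one_pow, one_mul,
          inv_pow, inv_pow, ← pow_mul, mul_comm (i : ℕ) l, pow_mul, hξ.pow_eq_one, one_pow,
          inv_one]
      rw [hcl, sub_self, zero_div, mul_zero]
      simp [Matrix.single, (Ne.symm hib : b ≠ i)]
  · simp only [if_neg hij]
    rw [Finset.sum_const_zero, mul_zero]
    have hnb : ¬(b = i ∧ b = j) := by rintro ⟨rfl, rfl⟩; exact hij rfl
    simp [Matrix.single, hnb]

open Fin.NatCast in
private lemma P_mul_std {F : Type*} [Field F] {l : ℕ} [NeZero l] (a b : Fin l) :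
    Pmat F l ^ ((a - b : Fin l) : ℕ) * Matrix.single b b 1
      = Matrix.single a b 1 := by
  rw [Pmat_pow]
  ext i j
  rw [Matrix.mul_apply, Finset.sum_eq_single b]
  · simp only [Matrix.of_apply, Fin.cast_val_eq_self]
    rw [show b + (a - b) = a from add_sub_cancel b a]
    simp only [Matrix.single, Matrix.of_apply]
    by_cases h1 : b = j <;> by_cases h2 : a = i <;> simp [h1, h2, eq_comm]
  · intro k _ hk
    have hnb : ¬(b = k ∧ b = j) := fun h => hk h.1.symm
    simp [Matrix.single, hnb]
  · simp

private lemma aux_pow_mod {M : Type*} [Monoid M] (x : M) (l : ℕ) (h : x ^ l = 1) (m : ℕ) :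
    x ^ (m % l) = x ^ m := by
  conv_rhs => rw [← Nat.div_add_mod m l]
  rw [pow_add, pow_mul, h, one_pow, one_mul]

private lemma aux_comm1 {F A : Type*} [CommSemiring F] [Semiring A] [Algebra F A]
    (x y : A) (ξ : F) (h : y * x = ξ • (x * y)) (a : ℕ) :
    y * x ^ a = ξ ^ a • (x ^ a * y) := by
  induction a with
  | zero => simp
  | succ n ih =>
    calc y * x ^ (n + 1) = (y * x ^ n) * x := by rw [pow_succ, mul_assoc]
    _ = ξ ^ n • (x ^ n * (y * x)) := by rw [ih, smul_mul_assoc, mul_assoc]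
    _ = ξ ^ n • (x ^ n * (ξ • (x * y))) := by rw [h]
    _ = ξ ^ (n + 1) • (x ^ (n + 1) * y) := by
        rw [mul_smul_comm, smul_smul, ← pow_succ, ← mul_assoc, ← pow_succ]

private lemma aux_comm2 {F A : Type*} [CommSemiring F] [Semiring A] [Algebra F A]
    (x y : A) (ξ : F) (h : y * x = ξ • (x * y)) (j a : ℕ) :
    y ^ j * x ^ a = ξ ^ (j * a) • (x ^ a * y ^ j) := by
  induction j with
  | zero => simp
  | succ n ih =>
    calc y ^ (n + 1) * x ^ a = y * (y ^ n * x ^ a) := by rw [pow_succ', mul_assoc]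
    _ = ξ ^ (n * a) • (y * x ^ a * y ^ n) := by rw [ih, mul_smul_comm, mul_assoc]
    _ = ξ ^ (n * a) • ((ξ ^ a • (x ^ a * y)) * y ^ n) := by rw [aux_comm1 x y ξ h a]
    _ = (ξ ^ (n * a) * ξ ^ a) • (x ^ a * (y * y ^ n)) := by
        rw [smul_mul_assoc, smul_smul, mul_assoc]
    _ = ξ ^ ((n + 1) * a) • (x ^ a * y ^ (n + 1)) := by
        rw [← pow_add, ← pow_succ', show n * a + a = (n + 1) * a from by ring]

/-- the algebra generated by `x, y` with `x^l = y^l = 1`,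
`y x = ξ x y`, for `ξ` a primitive `l`-th root of unity, is isomorphic to `M_l(F)`. -/
theorem stmt_11 (F : Type*) [Field F] (l : ℕ) (hl : 2 ≤ l) (ξ : F)
    (hξ : IsPrimitiveRoot ξ l) :
    Nonempty (RingQuot (TwoGenRel F l ξ) ≃ₐ[F] Matrix (Fin l) (Fin l) F) := by
  classical
  haveI : NeZero l := ⟨by omega⟩
  have hξ0 : ξ ≠ 0 := hξ.ne_zero (by omega)
  set A := RingQuot (TwoGenRel F l ξ) with hA
  let mk : FreeAlgebra F (Fin 2) →ₐ[F] A := RingQuot.mkAlgHom F (TwoGenRel F l ξ)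
  set x : A := mk (FreeAlgebra.ι F 0) with hxdef
  set y : A := mk (FreeAlgebra.ι F 1) with hydef
  have hx : x ^ l = 1 := by
    have h := RingQuot.mkAlgHom_rel F (TwoGenRel.xpow (F := F) (l := l) (ξ := ξ))
    rw [map_pow, map_one] at h
    exact h
  have hy : y ^ l = 1 := by
    have h := RingQuot.mkAlgHom_rel F (TwoGenRel.ypow (F := F) (l := l) (ξ := ξ))
    rw [map_pow, map_one] at h
    exact h
  have hyx : y * x = ξ • (x * y) := by
    have h := RingQuot.mkAlgHom_rel F (TwoGenRel.comm (F := F) (l := l) (ξ := ξ))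
    rw [map_mul, map_smul, map_mul] at h
    exact h
  -- the algebra hom to matrices
  let f : FreeAlgebra F (Fin 2) →ₐ[F] Matrix (Fin l) (Fin l) F :=
    FreeAlgebra.lift F ![Dmat F l ξ, Pmat F l]
  have hf0 : f (FreeAlgebra.ι F 0) = Dmat F l ξ := by
    simp [f, FreeAlgebra.lift_ι_apply]
  have hf1 : f (FreeAlgebra.ι F 1) = Pmat F l := by
    simp [f, FreeAlgebra.lift_ι_apply]
  have hrel : ∀ ⦃a b⦄, TwoGenRel F l ξ a b → f a = f b := by
    intro a b h
    cases h with
    | xpow => rw [map_pow, map_one, hf0, Dmat_pow_l hξ.pow_eq_one]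
    | ypow => rw [map_pow, map_one, hf1, Pmat_pow_l]
    | comm =>
      rw [map_mul, map_smul, map_mul, hf0, hf1]
      exact PD_comm hl hξ0 hξ.pow_eq_one
  let φ : A →ₐ[F] Matrix (Fin l) (Fin l) F := RingQuot.liftAlgHom F ⟨f, hrel⟩
  have hφx : φ x = Dmat F l ξ := by
    rw [hxdef]
    show (RingQuot.liftAlgHom F ⟨f, hrel⟩) (RingQuot.mkAlgHom F _ (FreeAlgebra.ι F 0)) = _
    rw [RingQuot.liftAlgHom_mkAlgHom_apply, hf0]
  have hφy : φ y = Pmat F l := by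
    rw [hydef]
    show (RingQuot.liftAlgHom F ⟨f, hrel⟩) (RingQuot.mkAlgHom F _ (FreeAlgebra.ι F 1)) = _
    rw [RingQuot.liftAlgHom_mkAlgHom_apply, hf1]
  -- surjectivity
  have hsurj : Function.Surjective φ := by
    have hD : Dmat F l ξ ∈ φ.range := ⟨x, hφx⟩
    have hP : Pmat F l ∈ φ.range := ⟨y, hφy⟩
    have hstd : ∀ a b : Fin l, Matrix.single a b 1 ∈ φ.range := by
      intro a b
      have hEbb : Matrix.single b b 1 ∈ φ.range := by
        rw [← diag_proj hl hξ b]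
        exact Subalgebra.smul_mem _ (Subalgebra.sum_mem _ fun k _ =>
          Subalgebra.smul_mem _ (pow_mem hD k) _) _
      rw [← P_mul_std a b]
      exact mul_mem (pow_mem hP _) hEbb
    intro M
    have hM : M ∈ φ.range := by
      rw [Matrix.matrix_eq_sum_single M]
      refine Subalgebra.sum_mem _ fun i _ => Subalgebra.sum_mem _ fun j _ => ?_
      have : Matrix.single i j (M i j) = (M i j) • Matrix.single i j 1 := by
        rw [Matrix.smul_single, smul_eq_mul, mul_one]
      rw [this]
      exact Subalgebra.smul_mem _ (hstd i j) _
    exact hM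
  -- spanning set of the quotient
  set S : Set A := Set.range fun p : Fin l × Fin l => x ^ (p.1 : ℕ) * y ^ (p.2 : ℕ) with hS
  set T : Submodule F A := Submodule.span F S with hT
  have hmem : ∀ m n : ℕ, x ^ m * y ^ n ∈ T := by
    intro m n
    have hxm : x ^ m = x ^ (m % l) := (aux_pow_mod x l hx m).symm
    have hyn : y ^ n = y ^ (n % l) := (aux_pow_mod y l hy n).symm
    rw [hxm, hyn]
    exact Submodule.subset_span
      ⟨(⟨m % l, Nat.mod_lt _ (by omega)⟩, ⟨n % l, Nat.mod_lt _ (by omega)⟩), rfl⟩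
  have hTmul : ∀ a ∈ T, ∀ b ∈ T, a * b ∈ T := by
    have hle : T * T ≤ T := by
      rw [hT, Submodule.span_mul_span, Submodule.span_le]
      rw [Set.mul_subset_iff]
      rintro _ ⟨⟨i, j⟩, rfl⟩ _ ⟨⟨a, b⟩, rfl⟩
      have key : (x ^ (i : ℕ) * y ^ (j : ℕ)) * (x ^ (a : ℕ) * y ^ (b : ℕ))
          = ξ ^ ((j : ℕ) * (a : ℕ)) • (x ^ ((i : ℕ) + (a : ℕ)) * y ^ ((j : ℕ) + (b : ℕ))) := by
        rw [mul_assoc, ← mul_assoc (y ^ (j : ℕ)), aux_comm2 x y ξ hyx, smul_mul_assoc,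
          mul_smul_comm]
        congr 1
        simp [pow_add, mul_assoc]
      rw [key]
      exact Submodule.smul_mem _ _ (hmem _ _)
    intro a ha b hb
    exact hle (Submodule.mul_mem_mul ha hb)
  have h1T : (1 : A) ∈ T := by simpa using hmem 0 0
  let Talg : Subalgebra F A := Submodule.toSubalgebra T h1T (fun a b ha hb => hTmul a ha b hb)
  have hadj : ∀ a : A, a ∈ T := by
    have hle : Algebra.adjoin F ({x, y} : Set A) ≤ Talg := by
      apply Algebra.adjoin_le
      rintro z hz
      rcases hz with rfl | rfl
      · simpa [Talg] using hmem 1 0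
      · simpa [Talg] using hmem 0 1
    intro a
    obtain ⟨p, rfl⟩ := RingQuot.mkAlgHom_surjective F (TwoGenRel F l ξ) a
    have : RingQuot.mkAlgHom F (TwoGenRel F l ξ) p ∈ Algebra.adjoin F ({x, y} : Set A) := by
      induction p using FreeAlgebra.induction with
      | grade0 r =>
        rw [AlgHom.commutes]
        exact Subalgebra.algebraMap_mem _ r
      | grade1 i =>
        fin_cases i
        · exact Algebra.subset_adjoin (by left; rfl)
        · exact Algebra.subset_adjoin (by right; rfl)
      | mul a b ha hb => rw [map_mul]; exact mul_mem ha hb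
      | add a b ha hb => rw [map_add]; exact add_mem ha hb
    exact hle this
  have hTtop : T = ⊤ := eq_top_iff.2 fun a _ => hadj a
  haveI hfin : Module.Finite F A := ⟨by rw [← hTtop, hT]; exact Submodule.fg_span (Set.finite_range _)⟩
  -- dimension count
  have hrankA : Module.finrank F A ≤ l * l := by
    have h1 : Module.finrank F A = Module.finrank F (⊤ : Submodule F A) :=
      (finrank_top F A).symm
    rw [h1, ← hTtop, hT, hS]
    have h2 := finrank_range_le_card (R := F)
      (fun p : Fin l × Fin l => x ^ (p.1 : ℕ) * y ^ (p.2 : ℕ))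
    rw [Set.finrank] at h2
    refine h2.trans ?_
    simp
  have hrankM : Module.finrank F (Matrix (Fin l) (Fin l) F) = l * l := by
    rw [Module.finrank_matrix]
    simp
  have hinj : Function.Injective φ := by
    have h1 := LinearMap.finrank_range_add_finrank_ker (φ.toLinearMap)
    have hr : LinearMap.range φ.toLinearMap = ⊤ := LinearMap.range_eq_top.2 hsurj
    rw [hr, finrank_top] at h1
    have hker : Module.finrank F (LinearMap.ker φ.toLinearMap) = 0 := by omega
    have : LinearMap.ker φ.toLinearMap = ⊥ := Submodule.finrank_eq_zero.1 hker
    exact LinearMap.ker_eq_bot.1 this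
  exact ⟨AlgEquiv.ofBijective φ ⟨hinj, hsurj⟩⟩
end

section
/- Let l be an odd integer ≥ 3, F a field with a primitive l-th root of unity, and Clg(l, ℝ) the generalized Clifford algebra on the ordered set of real numbers. Then the centralizer in Clg(l, ℝ) of the set {x_q : q ∈ ℚ} of generators indexed by rational numbers equals F·1. -/
set_option linter.unusedSectionVars false
set_option maxHeartbeats 1000000

/-- The defining relations of the generalized Clifford algebra `Clg(l, I)`:
`x i ^ l = 1`, `x i⁻¹ * x j * x i = ξ • x j` for `i < j`, and
`x i⁻¹ * x j * x i = ξ⁻¹ • x j` for `i > j`, where `x i⁻¹ = x i ^ (l - 1)`. -/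
inductive ClgRel (F : Type*) [Field F] (l : ℕ) (ξ : F) (I : Type*) [LinearOrder I] :
    FreeAlgebra F I → FreeAlgebra F I → Prop
  | pow (i : I) : ClgRel F l ξ I (FreeAlgebra.ι F i ^ l) 1
  | conj_lt {i j : I} (h : i < j) :
      ClgRel F l ξ I (FreeAlgebra.ι F i ^ (l - 1) * FreeAlgebra.ι F j * FreeAlgebra.ι F i)
        (ξ • FreeAlgebra.ι F j)
  | conj_gt {i j : I} (h : j < i) :
      ClgRel F l ξ I (FreeAlgebra.ι F i ^ (l - 1) * FreeAlgebra.ι F j * FreeAlgebra.ι F i)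
        (ξ⁻¹ • FreeAlgebra.ι F j)

/-- The generalized Clifford algebra `Clg(l, I)` over `F`. -/
abbrev Clg (F : Type*) [Field F] (l : ℕ) (ξ : F) (I : Type*) [LinearOrder I] :=
  RingQuot (ClgRel F l ξ I)

/-- The generator `x i` of the generalized Clifford algebra. -/
noncomputable def clgGen (F : Type*) [Field F] (l : ℕ) (ξ : F) {I : Type*} [LinearOrder I]
    (i : I) : Clg F l ξ I :=
  RingQuot.mkAlgHom F (ClgRel F l ξ I) (FreeAlgebra.ι F i)

namespace Stmt14

variable {F : Type*} [Field F] {l : ℕ} {ξ : F}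

/-! ### powers of the root of unity indexed by `ZMod l` -/

noncomputable def pw (ξ : F) {l : ℕ} (a : ZMod l) : F := ξ ^ a.val

section pw
variable (hl : 3 ≤ l) (hξ : IsPrimitiveRoot ξ l)
include hl hξ

lemma xi_ne_zero : ξ ≠ 0 := by
  intro h
  have := hξ.pow_eq_one
  rw [h, zero_pow (by omega)] at this
  exact zero_ne_one this

lemma pw_natCast (e : ℕ) : pw ξ ((e : ZMod l)) = ξ ^ e := by
  haveI : NeZero l := ⟨by omega⟩
  have h : ((e : ZMod l)).val = e % l := ZMod.val_natCast l e
  rw [pw, h]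
  conv_rhs => rw [← Nat.mod_add_div e l, pow_add, pow_mul, hξ.pow_eq_one, one_pow, mul_one]

lemma pw_add (a b : ZMod l) : pw ξ (a + b) = pw ξ a * pw ξ b := by
  haveI : NeZero l := ⟨by omega⟩
  have : ((a.val + b.val : ℕ) : ZMod l) = a + b := by
    push_cast
    rw [ZMod.natCast_rightInverse a, ZMod.natCast_rightInverse b]
  rw [← this, pw_natCast hl hξ, pow_add, pw, pw]

omit hξ in
lemma pw_zero : pw ξ (0 : ZMod l) = 1 := by
  haveI : NeZero l := ⟨by omega⟩
  simp [pw, ZMod.val_zero]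

lemma pw_pow (a : ZMod l) (k : ℕ) : pw ξ a ^ k = pw ξ ((k : ZMod l) * a) := by
  haveI : NeZero l := ⟨by omega⟩
  have : ((a.val * k : ℕ) : ZMod l) = (k : ZMod l) * a := by
    push_cast
    rw [ZMod.natCast_rightInverse a]; ring
  rw [← this, pw_natCast hl hξ, pw, ← pow_mul, mul_comm (a.val)]

lemma pw_ne_zero (a : ZMod l) : pw ξ a ≠ 0 := pow_ne_zero _ (xi_ne_zero hl hξ)

lemma pw_inj {a b : ZMod l} (h : pw ξ a = pw ξ b) : a = b := by
  haveI : NeZero l := ⟨by omega⟩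
  have := hξ.pow_inj (ZMod.val_lt a) (ZMod.val_lt b) h
  exact ZMod.val_injective l this

lemma pw_one : pw ξ (1 : ZMod l) = ξ := by
  have := pw_natCast (ξ := ξ) hl hξ 1
  simpa using this

lemma pw_pow_l (a : ZMod l) : pw ξ a ^ l = 1 := by
  haveI : NeZero l := ⟨by omega⟩
  rw [pw_pow hl hξ, ZMod.natCast_self, zero_mul, pw_zero hl]

lemma xi_inv : ξ⁻¹ = pw ξ ((l - 1 : ℕ) : ZMod l) := by
  rw [pw_natCast hl hξ]
  field_simp [xi_ne_zero hl hξ]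
  rw [← pow_succ', show l - 1 + 1 = l by omega, hξ.pow_eq_one]

end pw

/-! ### the exponent-counting functions -/

noncomputable def bb (g : ℝ →₀ ZMod l) (t : ℝ) : ZMod l :=
  g.sum fun s v => if s < t then v else 0

noncomputable def bb' (g : ℝ →₀ ZMod l) (t : ℝ) : ZMod l :=
  g.sum fun s v => if t < s then v else 0

lemma bb_add (g g' : ℝ →₀ ZMod l) (t : ℝ) : bb (g + g') t = bb g t + bb g' t :=
  Finsupp.sum_add_index' (by intro a; simp) (by intro a b c; split <;> simp)

lemma bb_single (s : ℝ) (v : ZMod l) (t : ℝ) :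
    bb (Finsupp.single s v) t = if s < t then v else 0 := by
  rw [bb, Finsupp.sum_single_index]; simp

lemma bb_zero (t : ℝ) : bb (0 : ℝ →₀ ZMod l) t = 0 := by simp [bb]

lemma bb_eq_filter_sum (g : ℝ →₀ ZMod l) (t : ℝ) :
    bb g t = ∑ s ∈ g.support.filter (· < t), g s := by
  rw [bb, Finsupp.sum, Finset.sum_filter]

lemma bb'_eq_filter_sum (g : ℝ →₀ ZMod l) (t : ℝ) :
    bb' g t = ∑ s ∈ g.support.filter (t < ·), g s := by
  rw [bb', Finsupp.sum, Finset.sum_filter]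

/-! ### the twisted regular representation -/

noncomputable def TT (ξ : F) (l : ℕ) (t : ℝ) :
    Module.End F ((ℝ →₀ ZMod l) →₀ F) :=
  Finsupp.lsum F fun h => pw ξ (bb h t) • Finsupp.lsingle (h + Finsupp.single t 1)

lemma TT_single (t : ℝ) (h : ℝ →₀ ZMod l) (c : F) :
    TT ξ l t (Finsupp.single h c)
      = Finsupp.single (h + Finsupp.single t 1) (pw ξ (bb h t) * c) := by
  rw [TT, Finsupp.lsum_single]
  simp [Finsupp.smul_single, smul_eq_mul, mul_comm]

lemma bb_shift (h : ℝ →₀ ZMod l) (t : ℝ) (v : ZMod l) :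
    bb (h + Finsupp.single t v) t = bb h t := by
  rw [bb_add, bb_single]; simp

lemma TT_pow_single (t : ℝ) (k : ℕ) (h : ℝ →₀ ZMod l) (c : F) :
    (TT ξ l t ^ k) (Finsupp.single h c)
      = Finsupp.single (h + Finsupp.single t (k : ZMod l)) (pw ξ (bb h t) ^ k * c) := by
  induction k with
  | zero => simp
  | succ k ih =>
    rw [pow_succ', Module.End.mul_apply, ih, TT_single, bb_shift]
    congr 1
    · rw [add_assoc, ← Finsupp.single_add]
      norm_cast
    · ring

section rel
variable (hl : 3 ≤ l) (hξ : IsPrimitiveRoot ξ l)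
include hl hξ

lemma TT_pow_l (t : ℝ) : TT ξ l t ^ l = 1 := by
  haveI : NeZero l := ⟨by omega⟩
  apply Finsupp.lhom_ext
  intro h c
  rw [TT_pow_single, Module.End.one_apply]
  rw [ZMod.natCast_self, Finsupp.single_zero, add_zero, pw_pow_l hl hξ, one_mul]

lemma TT_conj_lt {i j : ℝ} (hij : i < j) :
    TT ξ l i ^ (l - 1) * TT ξ l j * TT ξ l i = ξ • TT ξ l j := by
  haveI : NeZero l := ⟨by omega⟩
  apply Finsupp.lhom_ext
  intro h c
  rw [Module.End.mul_apply, Module.End.mul_apply, TT_single, TT_single, TT_pow_single,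
    LinearMap.smul_apply, TT_single]
  have e1 : bb (h + Finsupp.single i 1) j = bb h j + 1 := by
    rw [bb_add, bb_single, if_pos hij]
  have e2 : bb (h + Finsupp.single i 1 + Finsupp.single j 1) i = bb h i := by
    rw [bb_add, bb_add, bb_single, bb_single, if_neg (lt_irrefl i), if_neg (not_lt.mpr hij.le)]
    simp
  rw [e1, e2]
  have hz : (((l - 1 : ℕ) : ZMod l) + 1 : ZMod l) = 0 := by
    have h0 : ((l - 1 + 1 : ℕ) : ZMod l) = 0 := by
      rw [show l - 1 + 1 = l by omega]; exact ZMod.natCast_self l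
    push_cast at h0
    linear_combination h0
  have h0 : Finsupp.single i (1 : ZMod l) + Finsupp.single i ((l - 1 : ℕ) : ZMod l) = 0 := by
    rw [← Finsupp.single_add, add_comm, hz, Finsupp.single_zero]
  have hidx : ((h + Finsupp.single i 1) + Finsupp.single j 1)
      + Finsupp.single i ((l - 1 : ℕ) : ZMod l) = h + Finsupp.single j (1 : ZMod l) := by
    calc ((h + Finsupp.single i 1) + Finsupp.single j 1) + Finsupp.single i ((l - 1 : ℕ) : ZMod l)
        = (h + Finsupp.single j 1)
          + (Finsupp.single i 1 + Finsupp.single i ((l - 1 : ℕ) : ZMod l)) := by abel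
      _ = h + Finsupp.single j 1 := by rw [h0, add_zero]
  rw [hidx, Finsupp.smul_single, smul_eq_mul, pw_pow hl hξ]
  congr 1
  have h1 : pw ξ (((l - 1 : ℕ) : ZMod l) * bb h i) * pw ξ (bb h i) = 1 := by
    rw [← pw_add hl hξ,
      show ((l - 1 : ℕ) : ZMod l) * bb h i + bb h i = 0 by linear_combination (bb h i) * hz,
      pw_zero hl]
  have h2 : pw ξ (bb h j + 1) = pw ξ (bb h j) * ξ := by
    rw [pw_add hl hξ, pw_one hl hξ]
  calc pw ξ (((l - 1 : ℕ) : ZMod l) * bb h i) * (pw ξ (bb h j + 1) * (pw ξ (bb h i) * c))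
      = (pw ξ (((l - 1 : ℕ) : ZMod l) * bb h i) * pw ξ (bb h i)) * pw ξ (bb h j + 1) * c := by
        ring
    _ = ξ * (pw ξ (bb h j) * c) := by rw [h1, h2]; ring

lemma TT_conj_gt {i j : ℝ} (hji : j < i) :
    TT ξ l i ^ (l - 1) * TT ξ l j * TT ξ l i = ξ⁻¹ • TT ξ l j := by
  haveI : NeZero l := ⟨by omega⟩
  apply Finsupp.lhom_ext
  intro h c
  rw [Module.End.mul_apply, Module.End.mul_apply, TT_single, TT_single, TT_pow_single,
    LinearMap.smul_apply, TT_single]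
  have e1 : bb (h + Finsupp.single i 1) j = bb h j := by
    rw [bb_add, bb_single, if_neg (not_lt.mpr hji.le)]
    simp
  have e2 : bb (h + Finsupp.single i 1 + Finsupp.single j 1) i = bb h i + 1 := by
    rw [bb_add, bb_add, bb_single, bb_single, if_neg (lt_irrefl i), if_pos hji]
    simp
  rw [e1, e2]
  have hz : (((l - 1 : ℕ) : ZMod l) + 1 : ZMod l) = 0 := by
    have h0 : ((l - 1 + 1 : ℕ) : ZMod l) = 0 := by
      rw [show l - 1 + 1 = l by omega]; exact ZMod.natCast_self l
    push_cast at h0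
    linear_combination h0
  have h0 : Finsupp.single i (1 : ZMod l) + Finsupp.single i ((l - 1 : ℕ) : ZMod l) = 0 := by
    rw [← Finsupp.single_add, add_comm, hz, Finsupp.single_zero]
  have hidx : ((h + Finsupp.single i 1) + Finsupp.single j 1)
      + Finsupp.single i ((l - 1 : ℕ) : ZMod l) = h + Finsupp.single j (1 : ZMod l) := by
    calc ((h + Finsupp.single i 1) + Finsupp.single j 1) + Finsupp.single i ((l - 1 : ℕ) : ZMod l)
        = (h + Finsupp.single j 1)
          + (Finsupp.single i 1 + Finsupp.single i ((l - 1 : ℕ) : ZMod l)) := by abel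
      _ = h + Finsupp.single j 1 := by rw [h0, add_zero]
  rw [hidx, Finsupp.smul_single, smul_eq_mul, pw_pow hl hξ]
  congr 1
  have h1 : pw ξ (((l - 1 : ℕ) : ZMod l) * (bb h i + 1)) * pw ξ (bb h i) = ξ⁻¹ := by
    rw [← pw_add hl hξ,
      show ((l - 1 : ℕ) : ZMod l) * (bb h i + 1) + bb h i = ((l - 1 : ℕ) : ZMod l) by
        linear_combination (bb h i) * hz,
      ← xi_inv hl hξ]
  calc pw ξ (((l - 1 : ℕ) : ZMod l) * (bb h i + 1)) * (pw ξ (bb h j) * (pw ξ (bb h i) * c))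
      = (pw ξ (((l - 1 : ℕ) : ZMod l) * (bb h i + 1)) * pw ξ (bb h i)) * (pw ξ (bb h j) * c) := by
        ring
    _ = ξ⁻¹ * (pw ξ (bb h j) * c) := by rw [h1]

end rel

/-! ### the representation of `Clg` -/

noncomputable def piA (hl : 3 ≤ l) (hξ : IsPrimitiveRoot ξ l) :
    Clg F l ξ ℝ →ₐ[F] Module.End F ((ℝ →₀ ZMod l) →₀ F) :=
  RingQuot.liftAlgHom F ⟨FreeAlgebra.lift F (TT ξ l), by
    intro x y r
    induction r with
    | pow i =>
        simp only [map_pow, map_one, FreeAlgebra.lift_ι_apply]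
        exact TT_pow_l hl hξ i
    | conj_lt h =>
        simp only [map_mul, map_pow, map_smul, FreeAlgebra.lift_ι_apply]
        exact TT_conj_lt hl hξ h
    | conj_gt h =>
        simp only [map_mul, map_pow, map_smul, FreeAlgebra.lift_ι_apply]
        exact TT_conj_gt hl hξ h⟩

lemma piA_gen (hl : 3 ≤ l) (hξ : IsPrimitiveRoot ξ l) (t : ℝ) :
    piA hl hξ (clgGen F l ξ t) = TT ξ l t := by
  rw [clgGen, piA, RingQuot.liftAlgHom_mkAlgHom_apply, FreeAlgebra.lift_ι_apply]

/-! ### relations inside `Clg` -/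

section clg
variable (hl : 3 ≤ l) (hξ : IsPrimitiveRoot ξ l)

lemma Xpow_l (t : ℝ) : clgGen F l ξ t ^ l = 1 := by
  have h := RingQuot.mkAlgHom_rel F (ClgRel.pow (F := F) (l := l) (ξ := ξ) (I := ℝ) t)
  rw [map_pow, map_one] at h
  exact h

include hl in
lemma Xswap {s t : ℝ} (hst : s < t) :
    clgGen F l ξ t * clgGen F l ξ s = ξ • (clgGen F l ξ s * clgGen F l ξ t) := by
  have h := RingQuot.mkAlgHom_rel F (ClgRel.conj_lt (F := F) (l := l) (ξ := ξ) (I := ℝ) hst)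
  rw [map_mul, map_mul, map_pow, map_smul] at h
  set Xs := clgGen F l ξ s
  set Xt := clgGen F l ξ t
  have hh : Xs ^ (l - 1) * Xt * Xs = ξ • Xt := h
  have hpow : Xs ^ l = Xs * Xs ^ (l - 1) := by
    rw [← pow_succ', show l - 1 + 1 = l by omega]
  calc Xt * Xs = Xs ^ l * (Xt * Xs) := by rw [Xpow_l, one_mul]
    _ = Xs * (Xs ^ (l - 1) * Xt * Xs) := by rw [hpow]; noncomm_ring
    _ = Xs * (ξ • Xt) := by rw [hh]
    _ = ξ • (Xs * Xt) := mul_smul_comm ξ Xs Xt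

include hl in
lemma Xswap_pow {s t : ℝ} (hst : s < t) (e : ℕ) :
    clgGen F l ξ t * clgGen F l ξ s ^ e = ξ ^ e • (clgGen F l ξ s ^ e * clgGen F l ξ t) := by
  set Xs := clgGen F l ξ s
  set Xt := clgGen F l ξ t
  induction e with
  | zero => simp
  | succ e ih =>
    calc Xt * Xs ^ (e + 1) = (Xt * Xs ^ e) * Xs := by rw [pow_succ]; noncomm_ring
      _ = ξ ^ e • (Xs ^ e * (Xt * Xs)) := by rw [ih]; rw [smul_mul_assoc]; noncomm_ring
      _ = ξ ^ e • (Xs ^ e * (ξ • (Xs * Xt))) := by rw [Xswap hl hst]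
      _ = (ξ ^ e * ξ) • ((Xs ^ e * Xs) * Xt) := by
          rw [mul_smul_comm, smul_smul, ← mul_assoc]
      _ = ξ ^ (e + 1) • (Xs ^ (e + 1) * Xt) := by rw [pow_succ, pow_succ]

include hl in
lemma Xswap_pow' {s t : ℝ} (hst : s < t) (e : ℕ) :
    clgGen F l ξ t ^ e * clgGen F l ξ s = ξ ^ e • (clgGen F l ξ s * clgGen F l ξ t ^ e) := by
  set Xs := clgGen F l ξ s
  set Xt := clgGen F l ξ t
  induction e with
  | zero => simp
  | succ e ih =>
    calc Xt ^ (e + 1) * Xs = Xt * (Xt ^ e * Xs) := by rw [pow_succ']; noncomm_ring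
      _ = ξ ^ e • (Xt * (Xs * Xt ^ e)) := by rw [ih, mul_smul_comm]
      _ = ξ ^ e • ((Xt * Xs) * Xt ^ e) := by rw [mul_assoc]
      _ = ξ ^ e • ((ξ • (Xs * Xt)) * Xt ^ e) := by rw [Xswap hl hst]
      _ = (ξ ^ e * ξ) • (Xs * (Xt * Xt ^ e)) := by
          rw [smul_mul_assoc, smul_smul, mul_assoc]
      _ = ξ ^ (e + 1) • (Xs * Xt ^ (e + 1)) := by rw [pow_succ, pow_succ']

include hl in
lemma Xpow_val_succ (t : ℝ) (a : ZMod l) :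
    clgGen F l ξ t ^ (a.val + 1) = clgGen F l ξ t ^ ((a + 1 : ZMod l)).val := by
  haveI : NeZero l := ⟨by omega⟩
  haveI : Fact (1 < l) := ⟨by omega⟩
  have hv : (a + 1 : ZMod l).val = (a.val + 1) % l := by
    rw [ZMod.val_add, ZMod.val_one]
  by_cases hc : a.val + 1 < l
  · rw [hv, Nat.mod_eq_of_lt hc]
  · have hva : a.val < l := ZMod.val_lt a
    have : a.val + 1 = l := by omega
    rw [hv, this, Nat.mod_self, pow_zero, Xpow_l]

/-! ### ordered monomials -/

noncomputable def mList (ξ : F) (l : ℕ) (L : List ℝ) (g : ℝ →₀ ZMod l) : Clg F l ξ ℝ :=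
  (L.map fun s => clgGen F l ξ s ^ (g s).val).prod

noncomputable def mm (ξ : F) (l : ℕ) (g : ℝ →₀ ZMod l) : Clg F l ξ ℝ :=
  mList ξ l (g.support.sort (· ≤ ·)) g

lemma mList_nil (g : ℝ →₀ ZMod l) : mList ξ l [] g = 1 := rfl

lemma mList_cons (s : ℝ) (L : List ℝ) (g : ℝ →₀ ZMod l) :
    mList ξ l (s :: L) g = clgGen F l ξ s ^ (g s).val * mList ξ l L g := by
  rw [mList, List.map_cons, List.prod_cons, mList]

lemma mList_congr {L : List ℝ} {g g' : ℝ →₀ ZMod l} (h : ∀ s ∈ L, g s = g' s) :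
    mList ξ l L g = mList ξ l L g' := by
  induction L with
  | nil => rfl
  | cons s L ih =>
    rw [mList_cons, mList_cons, h s (List.mem_cons_self),
      ih fun u hu => h u (List.mem_cons_of_mem _ hu)]

lemma mm_zero : mm ξ l (0 : ℝ →₀ ZMod l) = 1 := by
  rw [mm, Finsupp.support_zero, Finset.sort_empty, mList_nil]

include hl hξ in
lemma kl0 (t : ℝ) (L : List ℝ) (hL : L.Pairwise (· < ·)) (htL : t ∈ L) (g : ℝ →₀ ZMod l) :
    clgGen F l ξ t * mList ξ l L g
      = pw ξ (((L.filter (· < t)).map g).sum) • mList ξ l L (g + Finsupp.single t 1) := by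
  induction L with
  | nil => exact absurd htL (List.not_mem_nil)
  | cons s L ih =>
    have hall : ∀ b ∈ L, s < b := (List.pairwise_cons.mp hL).1
    have hLs : L.Pairwise (· < ·) := (List.pairwise_cons.mp hL).2
    rcases eq_or_ne s t with rfl | hst
    · -- head is t
      have hfil : (s :: L).filter (· < s) = [] := by
        rw [List.filter_eq_nil_iff]
        intro u hu
        rcases List.mem_cons.mp hu with rfl | hu'
        · simp
        · simp [not_lt.mpr (hall u hu').le]
      rw [hfil, List.map_nil, List.sum_nil, pw_zero hl, one_smul,
        mList_cons, mList_cons, ← mul_assoc, ← pow_succ', Xpow_val_succ hl]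
      have h1 : (g + Finsupp.single s (1 : ZMod l)) s = g s + 1 := by
        rw [Finsupp.add_apply, Finsupp.single_eq_same]
      rw [h1]
      congr 1
      exact mList_congr fun u hu => by
        simp [Finsupp.single_eq_of_ne' (ne_of_lt (hall u hu))]
    · -- head ≠ t
      have htL' : t ∈ L := by
        rcases List.mem_cons.mp htL with rfl | h
        · exact absurd rfl hst
        · exact h
      have hst' : s < t := hall t htL'
      have hfil : (s :: L).filter (· < t) = s :: L.filter (· < t) := by
        rw [List.filter_cons_of_pos (by simpa using hst')]
      rw [hfil, List.map_cons, List.sum_cons, mList_cons, ← mul_assoc]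
      rw [show clgGen F l ξ t * clgGen F l ξ s ^ (g s).val
          = ξ ^ (g s).val • (clgGen F l ξ s ^ (g s).val * clgGen F l ξ t) from
          Xswap_pow hl hst' _]
      rw [smul_mul_assoc, mul_assoc, ih hLs htL', mul_smul_comm, smul_smul]
      rw [mList_cons]
      have h2 : (g + Finsupp.single t (1 : ZMod l)) s = g s := by
        rw [Finsupp.add_apply, Finsupp.single_eq_of_ne' (Ne.symm hst), add_zero]
      rw [h2, pw_add hl hξ]
      congr 1

include hl hξ in
lemma kl_move (t : ℝ) (L : List ℝ) (hall : ∀ u ∈ L, t < u) (g : ℝ →₀ ZMod l) :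
    mList ξ l L g * clgGen F l ξ t
      = pw ξ ((L.map g).sum) • (clgGen F l ξ t * mList ξ l L g) := by
  induction L with
  | nil => rw [mList_nil, one_mul, mul_one, List.map_nil, List.sum_nil, pw_zero hl, one_smul]
  | cons s L ih =>
    have hts : t < s := hall s (List.mem_cons_self)
    have hall' : ∀ u ∈ L, t < u := fun u hu => hall u (List.mem_cons_of_mem _ hu)
    rw [mList_cons, List.map_cons, List.sum_cons, mul_assoc, ih hall']
    rw [mul_smul_comm, ← mul_assoc]
    rw [show clgGen F l ξ s ^ (g s).val * clgGen F l ξ t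
        = ξ ^ (g s).val • (clgGen F l ξ t * clgGen F l ξ s ^ (g s).val) from
        Xswap_pow' hl hts _]
    rw [smul_mul_assoc, smul_smul, pw_add hl hξ, mul_assoc]
    congr 1
    rw [mul_comm]
    rfl

include hl hξ in
lemma kl0' (t : ℝ) (L : List ℝ) (hL : L.Pairwise (· < ·)) (htL : t ∈ L) (g : ℝ →₀ ZMod l) :
    mList ξ l L g * clgGen F l ξ t
      = pw ξ (((L.filter (t < ·)).map g).sum) • mList ξ l L (g + Finsupp.single t 1) := by
  induction L with
  | nil => exact absurd htL (List.not_mem_nil)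
  | cons s L ih =>
    have hall : ∀ b ∈ L, s < b := (List.pairwise_cons.mp hL).1
    have hLs : L.Pairwise (· < ·) := (List.pairwise_cons.mp hL).2
    rcases eq_or_ne s t with rfl | hst
    · -- head is t, all of L is > t
      have hfil : (s :: L).filter (s < ·) = L := by
        rw [List.filter_cons_of_neg (by simp)]
        exact List.filter_eq_self.mpr fun u hu => by simpa using hall u hu
      rw [hfil, mList_cons, mul_assoc, kl_move hl hξ s L hall, mul_smul_comm, ← mul_assoc,
        ← pow_succ, Xpow_val_succ hl]
      have h1 : (g + Finsupp.single s (1 : ZMod l)) s = g s + 1 := by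
        rw [Finsupp.add_apply, Finsupp.single_eq_same]
      rw [mList_cons, h1]
      congr 2
      exact mList_congr fun u hu => by
        simp [Finsupp.single_eq_of_ne' (ne_of_lt (hall u hu))]
    · have htL' : t ∈ L := by
        rcases List.mem_cons.mp htL with rfl | h
        · exact absurd rfl hst
        · exact h
      have hst' : s < t := hall t htL'
      have hfil : (s :: L).filter (t < ·) = L.filter (t < ·) := by
        rw [List.filter_cons_of_neg (by simpa using not_lt.mpr hst'.le)]
      rw [hfil, mList_cons, mul_assoc, ih hLs htL', mul_smul_comm, mList_cons]
      have h2 : (g + Finsupp.single t (1 : ZMod l)) s = g s := by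
        rw [Finsupp.add_apply, Finsupp.single_eq_of_ne' (Ne.symm hst), add_zero]
      rw [h2]

end clg

/-! ### reduction to the canonical sorted list -/

lemma mList_filter_ne (L : List ℝ) (g : ℝ →₀ ZMod l) :
    mList ξ l L g = mList ξ l (L.filter fun s => g s ≠ 0) g := by
  induction L with
  | nil => rfl
  | cons s L ih =>
    by_cases hgs : g s = 0
    · rw [mList_cons, hgs, ZMod.val_zero, pow_zero, one_mul, ih,
        List.filter_cons_of_neg (by simpa using hgs)]
    · rw [mList_cons, ih, List.filter_cons_of_pos (by simpa using hgs), mList_cons]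

lemma mList_eq_mm (L : List ℝ) (hL : L.Pairwise (· < ·)) (g : ℝ →₀ ZMod l)
    (hs : ∀ s, g s ≠ 0 → s ∈ L) : mList ξ l L g = mm ξ l g := by
  haveI : IsAntisymm ℝ (· < ·) := ⟨fun a b h h' => absurd h' (asymm h)⟩
  have hsort : (g.support.sort (· ≤ ·)).Pairwise (· < ·) := (Finset.sortedLT_sort _).pairwise
  have key : L.filter (fun s => g s ≠ 0)
      = (g.support.sort (· ≤ ·)).filter (fun s => g s ≠ 0) := by
    refine List.Perm.eq_of_pairwise' (hL.filter _) (hsort.filter _) ?_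
    rw [List.perm_ext_iff_of_nodup ((hL.imp ne_of_lt).filter _) ((hsort.imp ne_of_lt).filter _)]
    intro x
    simp only [List.mem_filter, decide_eq_true_eq]
    constructor
    · rintro ⟨-, hx⟩
      exact ⟨(Finset.mem_sort _).mpr (Finsupp.mem_support_iff.mpr (by simpa using hx)), hx⟩
    · rintro ⟨-, hx⟩
      exact ⟨hs x (by simpa using hx), hx⟩
  rw [mList_filter_ne, key, ← mList_filter_ne, mm]

lemma list_sum_eq_bb (L : List ℝ) (hN : L.Nodup) (g : ℝ →₀ ZMod l)
    (hs : ∀ s, g s ≠ 0 → s ∈ L) (t : ℝ) :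
    ((L.filter (· < t)).map g).sum = bb g t := by
  classical
  have h1 : ((L.filter (· < t)).map (⇑g)).sum
      = ∑ s ∈ (L.filter (· < t)).toFinset, g s :=
    (List.sum_toFinset _ (hN.filter _)).symm
  rw [h1, List.toFinset_filter, bb_eq_filter_sum]
  refine (Finset.sum_subset ?_ ?_).symm
  · intro x hx
    rw [Finset.mem_filter] at hx ⊢
    refine ⟨List.mem_toFinset.mpr (hs x (Finsupp.mem_support_iff.mp hx.1)), by simpa using hx.2⟩
  · intro x hx hnx
    by_contra hgx
    apply hnx
    rw [Finset.mem_filter] at hx ⊢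
    exact ⟨Finsupp.mem_support_iff.mpr hgx, by simpa using hx.2⟩

lemma list_sum_eq_bb' (L : List ℝ) (hN : L.Nodup) (g : ℝ →₀ ZMod l)
    (hs : ∀ s, g s ≠ 0 → s ∈ L) (t : ℝ) :
    ((L.filter (t < ·)).map g).sum = bb' g t := by
  classical
  have h1 : ((L.filter (t < ·)).map (⇑g)).sum
      = ∑ s ∈ (L.filter (t < ·)).toFinset, g s :=
    (List.sum_toFinset _ (hN.filter _)).symm
  rw [h1, List.toFinset_filter, bb'_eq_filter_sum]
  refine (Finset.sum_subset ?_ ?_).symm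
  · intro x hx
    rw [Finset.mem_filter] at hx ⊢
    refine ⟨List.mem_toFinset.mpr (hs x (Finsupp.mem_support_iff.mp hx.1)), by simpa using hx.2⟩
  · intro x hx hnx
    by_contra hgx
    apply hnx
    rw [Finset.mem_filter] at hx ⊢
    exact ⟨Finsupp.mem_support_iff.mpr hgx, by simpa using hx.2⟩

section kl
variable (hl : 3 ≤ l) (hξ : IsPrimitiveRoot ξ l)
include hl hξ

lemma kl (t : ℝ) (g : ℝ →₀ ZMod l) :
    clgGen F l ξ t * mm ξ l g = pw ξ (bb g t) • mm ξ l (g + Finsupp.single t 1) := by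
  classical
  set L := (insert t g.support).sort (· ≤ ·) with hLdef
  have hLsorted : L.Pairwise (· < ·) := (Finset.sortedLT_sort _).pairwise
  have hLnodup : L.Nodup := Finset.sort_nodup _ _
  have htL : t ∈ L := (Finset.mem_sort _).mpr (Finset.mem_insert_self t _)
  have hsupp : ∀ s, g s ≠ 0 → s ∈ L := fun s hgs =>
    (Finset.mem_sort _).mpr (Finset.mem_insert_of_mem (Finsupp.mem_support_iff.mpr hgs))
  have hsupp' : ∀ s, (g + Finsupp.single t (1 : ZMod l)) s ≠ 0 → s ∈ L := by
    intro s hgs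
    by_cases hst : s = t
    · subst hst; exact htL
    · apply hsupp
      rwa [Finsupp.add_apply, Finsupp.single_eq_of_ne' (Ne.symm hst), add_zero] at hgs
  rw [← mList_eq_mm L hLsorted g hsupp, kl0 hl hξ t L hLsorted htL g,
    list_sum_eq_bb L hLnodup g hsupp t, mList_eq_mm L hLsorted _ hsupp']

lemma kl' (t : ℝ) (g : ℝ →₀ ZMod l) :
    mm ξ l g * clgGen F l ξ t = pw ξ (bb' g t) • mm ξ l (g + Finsupp.single t 1) := by
  classical
  set L := (insert t g.support).sort (· ≤ ·) with hLdef
  have hLsorted : L.Pairwise (· < ·) := (Finset.sortedLT_sort _).pairwise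
  have hLnodup : L.Nodup := Finset.sort_nodup _ _
  have htL : t ∈ L := (Finset.mem_sort _).mpr (Finset.mem_insert_self t _)
  have hsupp : ∀ s, g s ≠ 0 → s ∈ L := fun s hgs =>
    (Finset.mem_sort _).mpr (Finset.mem_insert_of_mem (Finsupp.mem_support_iff.mpr hgs))
  have hsupp' : ∀ s, (g + Finsupp.single t (1 : ZMod l)) s ≠ 0 → s ∈ L := by
    intro s hgs
    by_cases hst : s = t
    · subst hst; exact htL
    · apply hsupp
      rwa [Finsupp.add_apply, Finsupp.single_eq_of_ne' (Ne.symm hst), add_zero] at hgs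
  rw [← mList_eq_mm L hLsorted g hsupp, kl0' hl hξ t L hLsorted htL g,
    list_sum_eq_bb' L hLnodup g hsupp t, mList_eq_mm L hLsorted _ hsupp']

end kl

/-! ### evaluation of ordered monomials in the representation -/

section theta
variable (hl : 3 ≤ l) (hξ : IsPrimitiveRoot ξ l)
include hl hξ

lemma piA_mList (L : List ℝ) (g : ℝ →₀ ZMod l) (h : ℝ →₀ ZMod l) :
    ∃ d : F, d ≠ 0 ∧ piA hl hξ (mList ξ l L g) (Finsupp.single h 1)
      = Finsupp.single (h + (L.map fun s => Finsupp.single s (g s)).sum) d := by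
  haveI : NeZero l := ⟨by omega⟩
  induction L with
  | nil =>
    refine ⟨1, one_ne_zero, ?_⟩
    rw [mList_nil, map_one, Module.End.one_apply, List.map_nil, List.sum_nil, add_zero]
  | cons s L ih =>
    obtain ⟨d, hd, hΘ⟩ := ih
    refine ⟨pw ξ (bb (h + (L.map fun s => Finsupp.single s (g s)).sum) s) ^ (g s).val * d,
      mul_ne_zero (pow_ne_zero _ (pw_ne_zero hl hξ _)) hd, ?_⟩
    rw [mList_cons, map_mul, map_pow, piA_gen, Module.End.mul_apply, hΘ, TT_pow_single]
    rw [show (((g s).val : ℕ) : ZMod l) = g s from ZMod.natCast_rightInverse (g s)]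
    congr 1
    rw [List.map_cons, List.sum_cons]
    abel

lemma sum_map_single_sort (g : ℝ →₀ ZMod l) :
    ((g.support.sort (· ≤ ·)).map fun s => Finsupp.single s (g s)).sum = g := by
  classical
  rw [← List.sum_toFinset _ (Finset.sort_nodup _ _), Finset.sort_toFinset]
  exact Finsupp.sum_single g

lemma theta_mm (g : ℝ →₀ ZMod l) :
    ∃ d : F, d ≠ 0 ∧ piA hl hξ (mm ξ l g) (Finsupp.single (0 : ℝ →₀ ZMod l) 1)
      = Finsupp.single g d := by
  obtain ⟨d, hd, h⟩ := piA_mList hl hξ (g.support.sort (· ≤ ·)) g 0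
  refine ⟨d, hd, ?_⟩
  rw [show mm ξ l g = mList ξ l (g.support.sort (· ≤ ·)) g from rfl]
  rwa [sum_map_single_sort hl hξ, zero_add] at h

/-! ### spanning -/

lemma mem_span_mm (z : Clg F l ξ ℝ) : z ∈ Submodule.span F (Set.range (mm ξ l)) := by
  have hone : (1 : Clg F l ξ ℝ) ∈ Submodule.span F (Set.range (mm ξ l)) :=
    Submodule.subset_span ⟨0, mm_zero⟩
  have key : ∀ w : FreeAlgebra F ℝ, ∀ y ∈ Submodule.span F (Set.range (mm ξ l)),
      RingQuot.mkAlgHom F (ClgRel F l ξ ℝ) w * y ∈ Submodule.span F (Set.range (mm ξ l)) := by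
    intro w
    induction w using FreeAlgebra.induction with
    | grade0 r =>
      intro y hy
      rw [AlgHom.commutes, ← Algebra.smul_def]
      exact Submodule.smul_mem _ _ hy
    | grade1 t =>
      intro y hy
      change clgGen F l ξ t * y ∈ _
      induction hy using Submodule.span_induction with
      | mem x hx =>
        obtain ⟨g, rfl⟩ := hx
        rw [kl hl hξ]
        exact Submodule.smul_mem _ _ (Submodule.subset_span ⟨_, rfl⟩)
      | zero => rw [mul_zero]; exact Submodule.zero_mem _
      | add x y' hx hy' hx' hy'' => rw [mul_add]; exact Submodule.add_mem _ hx' hy''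
      | smul r x hx hx' => rw [mul_smul_comm]; exact Submodule.smul_mem _ _ hx'
    | mul a b ha hb =>
      intro y hy
      rw [map_mul, mul_assoc]
      exact ha _ (hb y hy)
    | add a b ha hb =>
      intro y hy
      rw [map_add, add_mul]
      exact Submodule.add_mem _ (ha y hy) (hb y hy)
  obtain ⟨w, hw⟩ := RingQuot.mkAlgHom_surjective F (ClgRel F l ξ ℝ) z
  have := key w 1 hone
  rwa [hw, mul_one] at this

end theta

/-! ### coefficient extraction -/

lemma single_sum_eval (c : (ℝ →₀ ZMod l) →₀ F) (δ : ℝ →₀ ZMod l)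
    (u v : (ℝ →₀ ZMod l) → F)
    (h : (∑ g ∈ c.support, Finsupp.single (g + δ) (u g))
        = ∑ g ∈ c.support, Finsupp.single (g + δ) (v g))
    (g0 : ℝ →₀ ZMod l) (hg0 : g0 ∈ c.support) : u g0 = v g0 := by
  classical
  have h3 := congrArg (fun w : (ℝ →₀ ZMod l) →₀ F => w (g0 + δ)) h
  simp only [Finsupp.finset_sum_apply] at h3
  rwa [Finset.sum_eq_single g0
      (fun b _ hbne => by
        rw [Finsupp.single_apply, if_neg (fun hc => hbne (add_right_cancel hc))])
      (fun hn => absurd hg0 hn),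
    Finset.sum_eq_single g0
      (fun b _ hbne => by
        rw [Finsupp.single_apply, if_neg (fun hc => hbne (add_right_cancel hc))])
      (fun hn => absurd hg0 hn),
    Finsupp.single_apply, if_pos rfl, Finsupp.single_apply, if_pos rfl] at h3

/-! ### the combinatorial lemma -/

lemma comb (hl : 3 ≤ l) (hodd : Odd l) (g : ℝ →₀ ZMod l)
    (hg : ∀ q : ℚ, bb g ((q : ℚ) : ℝ) = bb' g ((q : ℚ) : ℝ)) : g = 0 := by
  haveI : NeZero l := ⟨by omega⟩
  classical
  by_contra hne
  obtain ⟨t0, ht0⟩ := Finsupp.support_nonempty_iff.mpr hne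
  have hu : ∃ u : ℝ, u < t0 ∧ ∀ s ∈ g.support.filter (· < t0), s ≤ u := by
    by_cases h1 : (g.support.filter (· < t0)).Nonempty
    · refine ⟨(g.support.filter (· < t0)).max' h1, ?_,
        fun s hs => Finset.le_max' _ s hs⟩
      exact (Finset.mem_filter.mp (Finset.max'_mem _ h1)).2
    · exact ⟨t0 - 1, by linarith, fun s hs => absurd ⟨s, hs⟩ h1⟩
  obtain ⟨u, hut, hub⟩ := hu
  obtain ⟨q1, hq1u, hq1t⟩ := exists_rat_btwn hut
  have hv : ∃ v : ℝ, t0 < v ∧ ∀ s ∈ g.support.filter (t0 < ·), v ≤ s := by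
    by_cases h2 : (g.support.filter (t0 < ·)).Nonempty
    · refine ⟨(g.support.filter (t0 < ·)).min' h2, ?_,
        fun s hs => Finset.min'_le _ s hs⟩
      exact (Finset.mem_filter.mp (Finset.min'_mem _ h2)).2
    · exact ⟨t0 + 1, by linarith, fun s hs => absurd ⟨s, hs⟩ h2⟩
  obtain ⟨v, htv, hvb⟩ := hv
  obtain ⟨q2, htq2, hq2v⟩ := exists_rat_btwn htv
  have P1 : ∀ s ∈ g.support, (s < (q1 : ℝ) ↔ s < t0) := by
    intro s hs
    constructor
    · intro h; exact lt_trans h hq1t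
    · intro h; exact lt_of_le_of_lt (hub s (Finset.mem_filter.mpr ⟨hs, h⟩)) hq1u
  have P2 : ∀ s ∈ g.support, (s < (q2 : ℝ) ↔ s ≤ t0) := by
    intro s hs
    constructor
    · intro h
      by_contra hc
      push_neg at hc
      exact absurd (lt_of_lt_of_le hq2v (hvb s (Finset.mem_filter.mpr ⟨hs, hc⟩)))
        (not_lt.mpr h.le)
    · intro h; exact lt_of_le_of_lt h htq2
  have E1 : g.support.filter (· < (q2 : ℝ))
      = insert t0 (g.support.filter (· < (q1 : ℝ))) := by
    ext x
    simp only [Finset.mem_filter, Finset.mem_insert]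
    constructor
    · rintro ⟨hx, hlt⟩
      rcases lt_or_eq_of_le ((P2 x hx).mp hlt) with h | h
      · exact Or.inr ⟨hx, (P1 x hx).mpr h⟩
      · exact Or.inl h
    · rintro (rfl | ⟨hx, hlt⟩)
      · exact ⟨ht0, htq2⟩
      · exact ⟨hx, lt_trans ((P1 x hx).mp hlt) htq2⟩
  have E2 : g.support.filter ((q1 : ℝ) < ·)
      = insert t0 (g.support.filter ((q2 : ℝ) < ·)) := by
    ext x
    simp only [Finset.mem_filter, Finset.mem_insert]
    constructor
    · rintro ⟨hx, hlt⟩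
      have hxt : ¬ x < t0 := by
        intro hcon
        exact absurd hlt (not_lt.mpr (lt_of_le_of_lt
          (hub x (Finset.mem_filter.mpr ⟨hx, hcon⟩)) hq1u).le)
      rcases eq_or_lt_of_le (not_lt.mp hxt) with h | h
      · exact Or.inl h.symm
      · exact Or.inr ⟨hx, lt_of_lt_of_le hq2v (hvb x (Finset.mem_filter.mpr ⟨hx, h⟩))⟩
    · rintro (rfl | ⟨hx, hlt⟩)
      · exact ⟨ht0, hq1t⟩
      · exact ⟨hx, lt_trans hq1t (lt_trans htq2 hlt)⟩
  have ht0nq1 : t0 ∉ g.support.filter (· < (q1 : ℝ)) := by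
    simp only [Finset.mem_filter, not_and]
    intro _
    exact not_lt.mpr hq1t.le
  have ht0nq2 : t0 ∉ g.support.filter ((q2 : ℝ) < ·) := by
    simp only [Finset.mem_filter, not_and]
    intro _
    exact not_lt.mpr htq2.le
  have hbb2 : bb g (q2 : ℝ) = g t0 + bb g (q1 : ℝ) := by
    rw [bb_eq_filter_sum, bb_eq_filter_sum, E1, Finset.sum_insert ht0nq1]
  have hbb1 : bb' g (q1 : ℝ) = g t0 + bb' g (q2 : ℝ) := by
    rw [bb'_eq_filter_sum, bb'_eq_filter_sum, E2, Finset.sum_insert ht0nq2]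
  have h1 := hg q1
  have h2 := hg q2
  have h2g : (2 : ZMod l) * g t0 = 0 := by
    linear_combination -hbb2 - hbb1 + h2 - h1
  have hunit : IsUnit (2 : ZMod l) := by
    have := (ZMod.isUnit_iff_coprime 2 l).mpr (Nat.coprime_two_left.mpr hodd)
    simpa using this
  exact absurd (hunit.mul_right_eq_zero.mp h2g) (Finsupp.mem_support_iff.mp ht0)

end Stmt14

/-- Lemma 1 of the paper: for odd `l ≥ 3`, the centralizer in
`Clg(l, ℝ)` of the set of generators indexed by the rational numbers is `F·1`. -/
theorem stmt_14 (F : Type*) [Field F] (l : ℕ) (hl : 3 ≤ l) (hodd : Odd l) (ξ : F)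
    (hξ : IsPrimitiveRoot ξ l) :
    Subalgebra.centralizer F {a : Clg F l ξ ℝ | ∃ q : ℚ, a = clgGen F l ξ (q : ℝ)} = ⊥ := by
  classical
  haveI : NeZero l := ⟨by omega⟩
  apply le_antisymm
  · intro a ha
    rw [Subalgebra.mem_centralizer_iff] at ha
    have hcomm : ∀ q : ℚ, clgGen F l ξ (q : ℝ) * a = a * clgGen F l ξ (q : ℝ) := by
      intro q
      exact ha _ ⟨q, rfl⟩
    obtain ⟨c, hc⟩ := Finsupp.mem_span_range_iff_exists_finsupp.mp (Stmt14.mem_span_mm hl hξ a)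
    choose dd hdd hΘ using Stmt14.theta_mm hl hξ
    have key : ∀ g0 ∈ c.support, ∀ q : ℚ, Stmt14.bb g0 ((q : ℚ) : ℝ) = Stmt14.bb' g0 ((q : ℚ) : ℝ) := by
      intro g0 hg0 q
      have hL : clgGen F l ξ (q : ℝ) * a
          = ∑ g ∈ c.support, (c g * Stmt14.pw ξ (Stmt14.bb g ((q : ℚ) : ℝ)))
              • Stmt14.mm ξ l (g + Finsupp.single ((q : ℚ) : ℝ) 1) := by
        rw [← hc, Finsupp.sum, Finset.mul_sum]
        refine Finset.sum_congr rfl fun g hg => ?_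
        rw [mul_smul_comm, Stmt14.kl hl hξ, smul_smul]
      have hR : a * clgGen F l ξ (q : ℝ)
          = ∑ g ∈ c.support, (c g * Stmt14.pw ξ (Stmt14.bb' g ((q : ℚ) : ℝ)))
              • Stmt14.mm ξ l (g + Finsupp.single ((q : ℚ) : ℝ) 1) := by
        rw [← hc, Finsupp.sum, Finset.sum_mul]
        refine Finset.sum_congr rfl fun g hg => ?_
        rw [smul_mul_assoc, Stmt14.kl' hl hξ, smul_smul]
      have heq := hcomm q
      rw [hL, hR] at heq
      have heq2 := congrArg
        (fun z => (Stmt14.piA hl hξ z) (Finsupp.single (0 : ℝ →₀ ZMod l) (1 : F))) heq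
      simp only [map_sum, map_smul, LinearMap.sum_apply, LinearMap.smul_apply, hΘ,
        Finsupp.smul_single, smul_eq_mul] at heq2
      have hext := Stmt14.single_sum_eval c (Finsupp.single ((q : ℚ) : ℝ) 1)
        (fun g => (c g * Stmt14.pw ξ (Stmt14.bb g ((q : ℚ) : ℝ)))
          * dd (g + Finsupp.single ((q : ℚ) : ℝ) 1))
        (fun g => (c g * Stmt14.pw ξ (Stmt14.bb' g ((q : ℚ) : ℝ)))
          * dd (g + Finsupp.single ((q : ℚ) : ℝ) 1))
        heq2 g0 hg0
      have hcg0 : c g0 ≠ 0 := Finsupp.mem_support_iff.mp hg0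
      have h5 := mul_right_cancel₀ (hdd (g0 + Finsupp.single ((q : ℚ) : ℝ) 1)) hext
      have h6 := mul_left_cancel₀ hcg0 h5
      exact Stmt14.pw_inj hl hξ h6
    have hall0 : ∀ g0 ∈ c.support, g0 = 0 := fun g0 hg0 =>
      Stmt14.comb hl hodd g0 (key g0 hg0)
    have hcs : c = Finsupp.single 0 (c 0) := by
      ext x
      by_cases hx : x = 0
      · subst hx; simp
      · rw [Finsupp.single_apply, if_neg (Ne.symm hx)]
        by_contra hcx
        exact hx (hall0 x (Finsupp.mem_support_iff.mpr hcx))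
    have hmz : Stmt14.mm ξ l (0 : ℝ →₀ ZMod l) = 1 := Stmt14.mm_zero
    rw [← hc, hcs, Finsupp.sum_single_index (zero_smul F (Stmt14.mm ξ l 0)), hmz,
      Algebra.mem_bot]
    exact ⟨c 0, Algebra.algebraMap_eq_smul_one (c 0)⟩
  · intro x hx
    rw [Algebra.mem_bot] at hx
    obtain ⟨r, rfl⟩ := hx
    rw [Subalgebra.mem_centralizer_iff]
    intro y _
    exact (Algebra.commutes r y).symm
end
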